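/- arXiv:2511.11254 — 2 statements merged into one kernel-verified Lean document; each statement's English description precedes it below -/
import Mathlib

section
/- Let G be a finite abelian group, F a group, (F, G, ◁, ▷) a matched pair, σ cocycle data and τ trivial (τ(g, g'; f) = 1 for all g, g' ∈ G, f ∈ F). Suppose the Hopf algebra H = k^G τ#_σ kF admits a coquasitriangular structure. If f, f' ∈ F and g ∈ G_f ∩ G_{f'}, then there exists f'' ∈ O_f with g ◁ f'' ∈ G_{f'} if and only if there exists f''' ∈ O_{f'} with g ◁ f''' ∈ G_f, where G_f = {x ∈ G : x ▷ f = f} and O_f = {x ▷ f : x ∈ G}. -/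
/-- A matched pair of groups `(F, G, ◁, ▷)`: `rtr g f = g ▷ f` is an action of the
group `G` on the set `F`, and `ltl g f = g ◁ f` is an action of the group `F` on the
set `G`, satisfying the matched pair compatibility conditions. -/
structure MatchedPair (F G : Type*) [Group F] [Group G] where
  rtr : G → F → F
  ltl : G → F → G
  one_rtr : ∀ f, rtr 1 f = f
  mul_rtr : ∀ g g' f, rtr (g * g') f = rtr g (rtr g' f)
  ltl_one : ∀ g, ltl g 1 = g
  ltl_mul : ∀ g f f', ltl g (f * f') = ltl (ltl g f) f'
  rtr_mul : ∀ g f f', rtr g (f * f') = rtr g f * rtr (ltl g f) f'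
  mul_ltl : ∀ g g' f, ltl (g * g') f = ltl g (rtr g' f) * ltl g' f

/-- Cocycle data `(σ, τ)` for the abelian extension `k^G τ#_σ kF`. -/
structure CocycleData (k F G : Type*) [Field k] [Group F] [Group G]
    (mp : MatchedPair F G) where
  sig : G → F → F → kˣ
  tau : G → G → F → kˣ
  sig_one_left : ∀ g f, sig g 1 f = 1
  sig_one_right : ∀ g f, sig g f 1 = 1
  one_sig : ∀ f f', sig 1 f f' = 1
  sig_cocycle : ∀ g f f' f'',
    sig (mp.ltl g f) f' f'' * sig g f (f' * f'') = sig g f f' * sig g (f * f') f''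
  one_tau : ∀ g f, tau 1 g f = 1
  tau_one : ∀ g f, tau g 1 f = 1
  tau_one_right : ∀ g g', tau g g' 1 = 1
  tau_cocycle : ∀ g g' g'' f,
    tau g g' (mp.rtr g'' f) * tau (g * g') g'' f = tau g (g' * g'') f * tau g' g'' f
  compat : ∀ g g' f f',
    sig (g * g') f f' * tau g g' (f * f')
      = sig g (mp.rtr g' f) (mp.rtr (mp.ltl g' f) f') * sig g' f f' * tau g g' f
        * tau (mp.ltl g (mp.rtr g' f)) (mp.ltl g' f) f'

/-- The product `(p_g # f)(p_{g'} # f') = δ_{g ◁ f, g'} σ(g; f, f') p_g # (f f')` of two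
basis elements of `H = k^G τ#_σ kF`, as an element of `H` (realized as `(G × F) →₀ k`). -/
noncomputable def mulB {k F G : Type*} [Field k] [Group F] [Group G] [DecidableEq G]
    (mp : MatchedPair F G) (cd : CocycleData k F G mp) (i j : G × F) : (G × F) →₀ k :=
  if mp.ltl i.1 i.2 = j.1 then
    Finsupp.single (i.1, i.2 * j.2) ((cd.sig i.1 i.2 j.2 : kˣ) : k)
  else 0

/-- `R` (given by its values `R g f h f' = R(p_g # f, p_h # f')` on the basis
`{p_g # f}` of `H = k^G τ#_σ kF`) is a coquasitriangular structure on `H`: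
it is convolution invertible, satisfies `R(a, bc) = Σ R(a₁, c) R(a₂, b)` and
`R(ab, c) = Σ R(a, c₁) R(b, c₂)`, and the quasi-commutativity axiom
`Σ R(a₁, b₁) a₂ b₂ = Σ b₁ a₁ R(a₂, b₂)`, all expressed on basis elements using
`Δ(p_g # f) = Σ_x τ(g x⁻¹, x; f) (p_{g x⁻¹} # (x ▷ f)) ⊗ (p_x # f)` and
`ε(p_g # f) = δ_{g,1}`. -/
structure IsCQT {k F G : Type*} [Field k] [Group F] [Group G] [Fintype G] [DecidableEq G]
    (mp : MatchedPair F G) (cd : CocycleData k F G mp)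
    (R : G → F → G → F → k) : Prop where
  conv_inv : ∃ R' : G → F → G → F → k,
    (∀ (g h : G) (f f' : F),
      ∑ x : G, ∑ y : G,
        ((cd.tau (g * x⁻¹) x f : kˣ) : k) * ((cd.tau (h * y⁻¹) y f' : kˣ) : k) *
          R (g * x⁻¹) (mp.rtr x f) (h * y⁻¹) (mp.rtr y f') * R' x f y f'
        = (if g = 1 then (1 : k) else 0) * (if h = 1 then (1 : k) else 0)) ∧
    (∀ (g h : G) (f f' : F),
      ∑ x : G, ∑ y : G,
        ((cd.tau (g * x⁻¹) x f : kˣ) : k) * ((cd.tau (h * y⁻¹) y f' : kˣ) : k) *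
          R' (g * x⁻¹) (mp.rtr x f) (h * y⁻¹) (mp.rtr y f') * R x f y f'
        = (if g = 1 then (1 : k) else 0) * (if h = 1 then (1 : k) else 0))
  cqt1 : ∀ (g h l : G) (f f' f'' : F),
    (if mp.ltl h f' = l then (1 : k) else 0) * ((cd.sig h f' f'' : kˣ) : k)
        * R g f h (f' * f'')
      = ∑ x : G, ((cd.tau (g * x⁻¹) x f : kˣ) : k)
          * R (g * x⁻¹) (mp.rtr x f) l f'' * R x f h f'
  cqt2 : ∀ (g h l : G) (f f' f'' : F),
    (if mp.ltl g f = h then (1 : k) else 0) * ((cd.sig g f f' : kˣ) : k)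
        * R g (f * f') l f''
      = ∑ x : G, ((cd.tau (l * x⁻¹) x f'' : kˣ) : k)
          * R g f (l * x⁻¹) (mp.rtr x f'') * R h f' x f''
  qcomm : ∀ (g h : G) (f f' : F),
    (∑ x : G, ∑ y : G,
      (((cd.tau (g * x⁻¹) x f : kˣ) : k) * ((cd.tau (h * y⁻¹) y f' : kˣ) : k) *
        R (g * x⁻¹) (mp.rtr x f) (h * y⁻¹) (mp.rtr y f')) • mulB mp cd (x, f) (y, f'))
      = ∑ x : G, ∑ y : G,
        (((cd.tau (g * x⁻¹) x f : kˣ) : k) * ((cd.tau (h * y⁻¹) y f' : kˣ) : k) *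
          R x f y f') • mulB mp cd (h * y⁻¹, mp.rtr y f') (g * x⁻¹, mp.rtr x f)


section Aux
variable {k F G : Type*} [Field k] [Group F] [CommGroup G] [Fintype G] [DecidableEq G]
variable (mp : MatchedPair F G) (cd : CocycleData k F G mp)

omit [Fintype G] [DecidableEq G] in
lemma MatchedPair.rtr_one' (x : G) : mp.rtr x 1 = 1 := by
  have h := mp.rtr_mul x 1 1
  rw [mul_one, mp.ltl_one] at h
  exact (left_eq_mul.mp h)

omit [Fintype G] [DecidableEq G] in
lemma MatchedPair.one_ltl' (f : F) : mp.ltl 1 f = 1 := by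
  have h := mp.mul_ltl 1 1 f
  rw [one_mul, mp.one_rtr] at h
  exact (left_eq_mul.mp h)

/-- A pointwise consequence of the quasi-commutativity axiom `qcomm` (with the second
basis element of the form `p_h # 1`): a support condition and a transport identity
for the values `R(p_b # c, p_y # 1)`. -/
lemma qpt (htau : ∀ (g g' : G) (f : F), cd.tau g g' f = 1)
    {R : G → F → G → F → k} (hQ : IsCQT mp cd R) (b y z : G) (c : F) :
    (mp.rtr b c ≠ c → R b c y 1 = 0) ∧
    (mp.rtr b c = c → R b (mp.rtr z c) (y * z * (mp.ltl z c)⁻¹) 1 = R b c y 1) := by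
  classical
  have key : ∀ w : F,
      (if c = w then R b (mp.rtr z c) (y * z * (mp.ltl z c)⁻¹) 1 else 0)
        = (if mp.rtr b c = w then R b c y 1 else 0) := by
    intro w
    have h := DFunLike.congr_fun (hQ.qcomm (b * z) (y * z) c 1) (z, w)
    simp only [mulB, htau, Units.val_one, one_mul, mul_one, mp.rtr_one',
      mp.ltl_one, cd.sig_one_right, cd.sig_one_left, Finset.sum_apply',
      Finsupp.smul_apply, smul_eq_mul] at h
    simp only [apply_ite (fun φ : (G × F) →₀ k => φ (z, w)), Finsupp.single_apply,
      Finsupp.coe_zero, Pi.zero_apply, Prod.mk.injEq, mul_ite, mul_zero, mul_one,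
      ← ite_and] at h
    have hcondL : ∀ x x₁ : G,
        (mp.ltl x c = x₁ ∧ x = z ∧ c = w) ↔ (x₁ = mp.ltl z c ∧ x = z ∧ c = w) := by
      intro x x₁
      constructor
      · rintro ⟨h1, rfl, h3⟩; exact ⟨h1.symm, rfl, h3⟩
      · rintro ⟨rfl, rfl, h3⟩; exact ⟨rfl, rfl, h3⟩
    have hcondR : ∀ x x₁ : G,
        (y * z * x₁⁻¹ = b * z * x⁻¹ ∧ y * z * x₁⁻¹ = z ∧ mp.rtr x c = w) ↔
          (x₁ = y ∧ x = b ∧ mp.rtr b c = w) := by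
      intro x x₁
      constructor
      · rintro ⟨h1, h2, h3⟩
        have hx₁ : x₁ = y := by
          have := mul_inv_eq_iff_eq_mul.mp h2
          rw [mul_comm z x₁] at this
          exact (mul_right_cancel this).symm
        have hx : x = b := by
          rw [h2] at h1
          have := (mul_inv_eq_iff_eq_mul.mp h1.symm).symm
          rw [mul_comm z x] at this
          exact mul_right_cancel this
        subst hx₁ hx
        exact ⟨rfl, rfl, h3⟩
      · rintro ⟨rfl, rfl, h3⟩
        refine ⟨by rw [mul_inv_cancel_comm, mul_inv_cancel_comm], mul_inv_cancel_comm .., h3⟩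
    simp only [hcondL, hcondR, ite_and, Finset.sum_ite_eq', Finset.mem_univ, if_true,
      mul_inv_cancel_right] at h
    exact h
  constructor
  · intro hb
    have h := key (mp.rtr b c)
    rw [if_pos rfl, if_neg (fun hc => hb hc.symm)] at h
    exact h.symm
  · intro hb
    have h := key c
    rw [if_pos rfl, if_pos hb] at h
    exact h

end Aux

section Sep
variable {k G : Type*} [Field k] [IsAlgClosed k] [CharZero k] [CommGroup G] [Fintype G]

/-- Characters of a finite abelian group with values in an algebraically closed field of
characteristic zero separate elements. -/
lemma sep_char (s : G) (hs : ∀ ψ : G →* kˣ, ψ s = 1) : s = 1 := by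
  by_contra hs1
  have : NeZero ((Monoid.exponent G : k)) :=
    ⟨Nat.cast_ne_zero.mpr Monoid.exponent_ne_zero_of_finite⟩
  obtain ⟨φ, hφ⟩ := CommGroup.exists_apply_ne_one_of_hasEnoughRootsOfUnity G k hs1
  exact hφ (hs φ)

end Sep

/-- The functional `Ψ_ψ(v, a) = ∑_l ψ(l) R(p_v # a, p_l # 1)` attached to a
character `ψ` of `G`. -/
noncomputable def PsiAux {k F G : Type*} [Field k] [Group F] [Group G] [Fintype G]
    (R : G → F → G → F → k) (ψ : G →* kˣ) (v : G) (a : F) : k :=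
  ∑ l : G, ((ψ l : kˣ) : k) * R v a l 1

section Psi
variable {k F G : Type*} [Field k] [Group F] [CommGroup G] [Fintype G] [DecidableEq G]
variable (mp : MatchedPair F G) (cd : CocycleData k F G mp)

/-- From convolution invertibility of `R`: for each character `ψ` there is a `v` with
`Ψ_ψ(v, 1) ≠ 0`. -/
lemma psi_exists (htau : ∀ (g g' : G) (f : F), cd.tau g g' f = 1)
    {R : G → F → G → F → k} (hQ : IsCQT mp cd R) (ψ : G →* kˣ) :
    ∃ v : G, PsiAux R ψ v 1 ≠ 0 := by
  classical
  obtain ⟨R', hinv, -⟩ := hQ.conv_inv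
  by_contra hall
  push_neg at hall
  have base : ∀ h : G, (∑ x : G, ∑ y : G, R x⁻¹ 1 (h * y⁻¹) 1 * R' x 1 y 1)
      = (if h = 1 then (1:k) else 0) := by
    intro h
    have hh := hinv 1 h 1 1
    simpa [htau, mp.rtr_one'] using hh
  have main : (1:k) = ∑ x : G, ∑ y : G,
      ((ψ y : kˣ) : k) * PsiAux R ψ x⁻¹ 1 * R' x 1 y 1 :=
    calc (1:k) = ∑ h : G, ((ψ h : kˣ) : k) * (if h = 1 then (1:k) else 0) := by simp
      _ = ∑ h : G, ((ψ h : kˣ) : k) *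
            (∑ x : G, ∑ y : G, R x⁻¹ 1 (h * y⁻¹) 1 * R' x 1 y 1) :=
          Finset.sum_congr rfl (fun h _ => by rw [base h])
      _ = ∑ h : G, ∑ x : G, ∑ y : G,
            ((ψ h : kˣ) : k) * (R x⁻¹ 1 (h * y⁻¹) 1 * R' x 1 y 1) := by
          simp only [Finset.mul_sum]
      _ = ∑ x : G, ∑ y : G, ∑ h : G,
            ((ψ h : kˣ) : k) * (R x⁻¹ 1 (h * y⁻¹) 1 * R' x 1 y 1) := by
          rw [Finset.sum_comm]
          exact Finset.sum_congr rfl (fun x _ => Finset.sum_comm)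
      _ = ∑ x : G, ∑ y : G,
            ((ψ y : kˣ) : k) * PsiAux R ψ x⁻¹ 1 * R' x 1 y 1 := by
          refine Finset.sum_congr rfl (fun x _ => Finset.sum_congr rfl (fun y _ => ?_))
          unfold PsiAux
          simp only [Finset.sum_mul, Finset.mul_sum]
          refine ((Equiv.sum_comp (Equiv.mulRight y) _).symm.trans
            (Finset.sum_congr rfl (fun m _ => ?_)))
          simp only [Equiv.coe_mulRight, mul_inv_cancel_right, map_mul, Units.val_mul]
          ring
  rw [Finset.sum_congr rfl (fun x _ => Finset.sum_congr rfl (fun y _ => by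
      rw [hall x⁻¹, mul_zero, zero_mul]))] at main
  simp at main

/-- From the axiom `cqt2` (with third basis element `p_l # 1`, summed against `ψ`):
the multiplicativity relation `Ψ_ψ(v, c)·Ψ_ψ(v ◁ c, c⁻¹) = σ(v; c, c⁻¹)·Ψ_ψ(v, 1)`. -/
lemma psi_mul (htau : ∀ (g g' : G) (f : F), cd.tau g g' f = 1)
    {R : G → F → G → F → k} (hQ : IsCQT mp cd R) (ψ : G →* kˣ) (v : G) (c : F) :
    PsiAux R ψ v c * PsiAux R ψ (mp.ltl v c) c⁻¹
      = ((cd.sig v c c⁻¹ : kˣ) : k) * PsiAux R ψ v 1 := by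
  classical
  have base : ∀ l : G, ((cd.sig v c c⁻¹ : kˣ) : k) * R v 1 l 1
      = ∑ x : G, R v c (l * x⁻¹) 1 * R (mp.ltl v c) c⁻¹ x 1 := by
    intro l
    have h := hQ.cqt2 v (mp.ltl v c) l c c⁻¹ 1
    simpa [htau, mp.rtr_one'] using h
  unfold PsiAux
  calc (∑ m : G, ((ψ m : kˣ) : k) * R v c m 1) *
        (∑ x : G, ((ψ x : kˣ) : k) * R (mp.ltl v c) c⁻¹ x 1)
      = ∑ x : G, ∑ m : G, (((ψ m : kˣ) : k) * R v c m 1) *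
          (((ψ x : kˣ) : k) * R (mp.ltl v c) c⁻¹ x 1) := by
        rw [Finset.sum_mul_sum]; exact Finset.sum_comm
    _ = ∑ x : G, ∑ l : G, ((ψ l : kˣ) : k) *
          (R v c (l * x⁻¹) 1 * R (mp.ltl v c) c⁻¹ x 1) := by
        refine Finset.sum_congr rfl (fun x _ => ?_)
        refine (Finset.sum_congr rfl (fun m _ => ?_)).trans
          (Equiv.sum_comp (Equiv.mulRight x)
            (fun l => ((ψ l : kˣ) : k) * (R v c (l * x⁻¹) 1 * R (mp.ltl v c) c⁻¹ x 1)))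
        simp only [Equiv.coe_mulRight, mul_inv_cancel_right, map_mul, Units.val_mul]
        ring
    _ = ∑ l : G, ∑ x : G, ((ψ l : kˣ) : k) *
          (R v c (l * x⁻¹) 1 * R (mp.ltl v c) c⁻¹ x 1) := Finset.sum_comm
    _ = ∑ l : G, ((ψ l : kˣ) : k) * (((cd.sig v c c⁻¹ : kˣ) : k) * R v 1 l 1) := by
        refine Finset.sum_congr rfl (fun l _ => ?_)
        rw [← Finset.mul_sum, ← base l]
    _ = ((cd.sig v c c⁻¹ : kˣ) : k) * ∑ l : G, ((ψ l : kˣ) : k) * R v 1 l 1 := by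
        rw [Finset.mul_sum]
        exact Finset.sum_congr rfl (fun l _ => by ring)

end Psi

/-- The key consequence of the existence of a coquasitriangular structure on
`H = k^G τ#_σ kF` (with `τ` trivial and `G` abelian): whenever `g ▷ c = c`,
also `g ◁ c = g`. -/
theorem ltl_eq_self_of_rtr_eq {k F G : Type*} [Field k] [IsAlgClosed k]
    [CharZero k] [Group F] [CommGroup G] [Fintype G] [DecidableEq G]
    (mp : MatchedPair F G) (cd : CocycleData k F G mp)
    (htau : ∀ (g g' : G) (f : F), cd.tau g g' f = 1)
    (hR : ∃ R : G → F → G → F → k, IsCQT mp cd R)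
    (g : G) (c : F) (hgc : mp.rtr g c = c) : mp.ltl g c = g := by
  classical
  obtain ⟨R, hQ⟩ := hR
  have hψ : ∀ ψ : G →* kˣ, ψ (g * (mp.ltl g c)⁻¹) = 1 := by
    intro ψ
    obtain ⟨v, hv1⟩ := psi_exists mp cd htau hQ ψ
    have hvc : PsiAux R ψ v c ≠ 0 := by
      intro h0
      have hm := psi_mul mp cd htau hQ ψ v c
      rw [h0, zero_mul] at hm
      exact hv1 (by
        rcases mul_eq_zero.mp hm.symm with h | h
        · exact absurd h (Units.ne_zero _)
        · exact h)
    have hvrtr : mp.rtr v c = c := by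
      by_contra hne
      apply hvc
      unfold PsiAux
      exact Finset.sum_eq_zero (fun l _ => by
        rw [(qpt mp cd htau hQ v l 1 c).1 hne, mul_zero])
    have htrans : PsiAux R ψ v (mp.rtr g c)
        = ((ψ (g * (mp.ltl g c)⁻¹) : kˣ) : k) * PsiAux R ψ v c := by
      unfold PsiAux
      rw [Finset.mul_sum]
      refine ((Equiv.sum_comp (Equiv.mulRight (g * (mp.ltl g c)⁻¹))
        (fun l => ((ψ l : kˣ) : k) * R v (mp.rtr g c) l 1)).symm.trans
        (Finset.sum_congr rfl (fun yy _ => ?_)))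
      simp only [Equiv.coe_mulRight, map_mul, Units.val_mul]
      rw [show yy * (g * (mp.ltl g c)⁻¹) = yy * g * (mp.ltl g c)⁻¹ by rw [mul_assoc]]
      rw [(qpt mp cd htau hQ v yy g c).2 hvrtr]
      ring
    rw [hgc] at htrans
    have hval : ((ψ (g * (mp.ltl g c)⁻¹) : kˣ) : k) = 1 :=
      mul_right_cancel₀ hvc (by rw [one_mul, ← htrans])
    exact Units.ext (by simpa using hval)
  have hsep := sep_char (k := k) (g * (mp.ltl g c)⁻¹) hψ
  have := mul_inv_eq_one.mp hsep
  exact this.symm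


/-- (Proposition on actions, part 2.) Let `G` be a finite abelian group, `τ` trivial, and
suppose `H = k^G τ#_σ kF` admits a coquasitriangular structure. If `g ∈ G_f ∩ G_{f'}`,
then there exists `f'' ∈ O_f` with `g ◁ f'' ∈ G_{f'}` if and only if there exists
`f''' ∈ O_{f'}` with `g ◁ f''' ∈ G_f`. -/
theorem exists_ltl_mem_stabilizer_iff_of_cqt {k F G : Type*} [Field k] [IsAlgClosed k]
    [CharZero k] [Group F] [CommGroup G] [Fintype G] [DecidableEq G]
    (mp : MatchedPair F G) (cd : CocycleData k F G mp)
    (htau : ∀ (g g' : G) (f : F), cd.tau g g' f = 1)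
    (hR : ∃ R : G → F → G → F → k, IsCQT mp cd R)
    (f f' : F) (g : G)
    (hgf : mp.rtr g f = f) (hgf' : mp.rtr g f' = f') :
    (∃ f'' ∈ Set.range (fun x : G => mp.rtr x f), mp.rtr (mp.ltl g f'') f' = f')
      ↔ (∃ f''' ∈ Set.range (fun x : G => mp.rtr x f'), mp.rtr (mp.ltl g f''') f = f) := by
  have h1 := ltl_eq_self_of_rtr_eq mp cd htau hR g f hgf
  have h2 := ltl_eq_self_of_rtr_eq mp cd htau hR g f' hgf'
  constructor
  · intro _
    exact ⟨f', ⟨1, mp.one_rtr f'⟩, by rw [h2]; exact hgf⟩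
  · intro _
    exact ⟨f, ⟨1, mp.one_rtr f⟩, by rw [h1]; exact hgf'⟩
end

section
/- Let G be a finite group, F a group, (F, G, ◁, ▷) a matched pair, σ, τ cocycle data, and suppose the Hopf algebra H = k^G τ#_σ kF admits a coquasitriangular structure. Fix f ∈ F. Let V with basis {v^(1), …, v^(m)} be a simple right comodule over the coalgebra k^{G_f}_{τ_f}, with coaction ρ(v^(i)) = Σ_{l=1}^m v^(l) ⊗ (Σ_{g∈G_f} a^g_{li} p_g), and let W with basis {w^(1), …, w^(n)} be a simple right comodule over the coalgebra k^G, with coaction ρ(w^(j)) = Σ_{k=1}^n w^(k) ⊗ (Σ_{h∈G} b^h_{kj} p_h), where a^g_{li}, b^h_{kj} ∈ k. Then for every g ∈ G_f and z ∈ T_f: Σ_{i=1}^m Σ_{j=1}^n a^g_{ii} b^{(z⁻¹ g z) ◁ (z⁻¹ ▷ f)}_{jj} = Σ_{i=1}^m Σ_{j=1}^n a^g_{ii} b^{z⁻¹ g z}_{jj}. -/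
set_option linter.unusedSectionVars false
section CQTAux

variable {k F G : Type*} [Field k] [Group F] [Group G] [Fintype G] [DecidableEq G]

lemma aux_rtr_one (mp : MatchedPair F G) (g : G) : mp.rtr g 1 = 1 := by
  have h := mp.rtr_mul g 1 1
  rw [mp.ltl_one, one_mul] at h
  have : mp.rtr g 1 * 1 = mp.rtr g 1 * mp.rtr g 1 := by rw [mul_one, ← h]
  exact (mul_left_cancel this).symm

lemma aux_stab_mul (mp : MatchedPair F G) {f : F} {u w : G}
    (hu : mp.rtr u f = f) (hw : mp.rtr w f = f) : mp.rtr (u * w) f = f := by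
  rw [mp.mul_rtr, hw, hu]

lemma aux_stab_inv (mp : MatchedPair F G) {f : F} {u : G}
    (hu : mp.rtr u f = f) : mp.rtr u⁻¹ f = f := by
  conv_lhs => rw [← hu, ← mp.mul_rtr, inv_mul_cancel, mp.one_rtr]

/-- `π(x) = x θ(x)⁻¹`, the `G_f`-part of `x` relative to the section `θ`. -/
def piX {G : Type*} [Group G] (th : G → G) (x : G) : G := x * (th x)⁻¹

lemma piX_def {G : Type*} [Group G] (th : G → G) (x : G) :
    piX th x = x * (th x)⁻¹ := rfl

lemma th_eq_piX_inv_mul {G : Type*} [Group G] (th : G → G) (x : G) :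
    th x = (piX th x)⁻¹ * x := by
  simp [piX, mul_assoc]

section Th
variable (mp : MatchedPair F G) (f : F) (th : G → G)
variable (hthG : ∀ x, mp.rtr (piX th x) f = f)
variable (hthMul : ∀ v w, mp.rtr v f = f → th (v * w) = th w)

include hthG hthMul in
lemma piX_mul {v : G} (w : G) (hv : mp.rtr v f = f) :
    piX th (v * w) = v * piX th w := by
  rw [piX, piX, hthMul v w hv, mul_assoc]

include hthG in
lemma rtr_th_inv (w : G) : mp.rtr (th w)⁻¹ f = mp.rtr w⁻¹ f := by
  have h : (th w)⁻¹ = w⁻¹ * piX th w := by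
    rw [th_eq_piX_inv_mul th w]; group
  rw [h, mp.mul_rtr, hthG w]

end Th

/-- the scalar `μ(g, z)`. -/
noncomputable def muX (mp : MatchedPair F G) (cd : CocycleData k F G mp)
    (f : F) (th : G → G) (g z : G) : k :=
  (((cd.tau (th (z * g⁻¹))⁻¹ (piX th (z * g⁻¹))⁻¹ f : kˣ) : k))⁻¹
    * ((cd.tau g z⁻¹ f : kˣ) : k)

lemma muX_ne_zero (mp : MatchedPair F G) (cd : CocycleData k F G mp)
    (f : F) (th : G → G) (g z : G) : muX mp cd f th g z ≠ 0 := by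
  unfold muX
  exact mul_ne_zero (inv_ne_zero (Units.ne_zero _)) (Units.ne_zero _)

lemma muX_one (mp : MatchedPair F G) (cd : CocycleData k F G mp)
    (f : F) (th : G → G) (z : G) (hz : th z = z) :
    muX mp cd f th 1 z = 1 := by
  unfold muX piX
  rw [inv_one, mul_one, hz, cd.one_tau, mul_inv_cancel, inv_one, cd.tau_one]
  simp

/-- The key scalar cocycle identity `(S)`. -/
lemma aux_muS (mp : MatchedPair F G) (cd : CocycleData k F G mp)
    (f : F) (th : G → G)
    (hthG : ∀ x, mp.rtr (piX th x) f = f)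
    (hthMul : ∀ v w, mp.rtr v f = f → th (v * w) = th w)
    (g₁ x z : G) :
    muX mp cd f th (g₁ * x) z * ((cd.tau g₁ x (mp.rtr z⁻¹ f) : kˣ) : k)
      = muX mp cd f th g₁ (th (z * x⁻¹)) * muX mp cd f th x z
        * ((cd.tau ((piX th (z * (g₁ * x)⁻¹))⁻¹ * piX th (z * x⁻¹))
            (piX th (z * x⁻¹))⁻¹ f : kˣ) : k) := by
  set w : G := z * (g₁ * x)⁻¹ with hw
  set w' : G := z * x⁻¹ with hw'
  -- abbreviations
  set θ : G := th w with hθ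
  set π : G := piX th w with hπ
  set θ' : G := th w' with hθ'
  set π' : G := piX th w' with hπ'
  have hπG : mp.rtr π f = f := hthG w
  have hπ'G : mp.rtr π' f = f := hthG w'
  have hπ'invG : mp.rtr π'⁻¹ f = f := aux_stab_inv mp hπ'G
  -- θ' * g₁⁻¹ = π'⁻¹ * w
  have hkey : θ' * g₁⁻¹ = π'⁻¹ * w := by
    rw [hθ', th_eq_piX_inv_mul th w', ← hπ', hw', hw]; group
  have hth2 : th (θ' * g₁⁻¹) = θ := by
    rw [hkey, hthMul π'⁻¹ w (aux_stab_inv mp hπ'G), hθ]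
  have hpi2 : piX th (θ' * g₁⁻¹) = π'⁻¹ * π := by
    rw [hkey, piX_mul mp f th hthG hthMul w (aux_stab_inv mp hπ'G), hπ]
  -- the three cocycle instances, coerced to k
  have i1 : ((cd.tau g₁ x (mp.rtr z⁻¹ f) : kˣ) : k) * ((cd.tau (g₁ * x) z⁻¹ f : kˣ) : k)
      = ((cd.tau g₁ (x * z⁻¹) f : kˣ) : k) * ((cd.tau x z⁻¹ f : kˣ) : k) := by
    have := cd.tau_cocycle g₁ x z⁻¹ f
    exact_mod_cast congrArg (Units.val) this
  have hθ'inv : θ'⁻¹ = x * z⁻¹ * π' := by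
    rw [hθ', th_eq_piX_inv_mul th w', ← hπ', hw']; group
  have i2 : ((cd.tau g₁ θ'⁻¹ f : kˣ) : k) * ((cd.tau (g₁ * θ'⁻¹) π'⁻¹ f : kˣ) : k)
      = ((cd.tau g₁ (x * z⁻¹) f : kˣ) : k) * ((cd.tau θ'⁻¹ π'⁻¹ f : kˣ) : k) := by
    have h := cd.tau_cocycle g₁ θ'⁻¹ π'⁻¹ f
    rw [hπ'invG] at h
    have h2 : θ'⁻¹ * π'⁻¹ = x * z⁻¹ := by
      rw [hθ', th_eq_piX_inv_mul th w', ← hπ', hw']; group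
    rw [h2] at h
    exact_mod_cast congrArg (Units.val) h
  have i3 : ((cd.tau θ⁻¹ (π⁻¹ * π') f : kˣ) : k) * ((cd.tau (θ⁻¹ * (π⁻¹ * π')) π'⁻¹ f : kˣ) : k)
      = ((cd.tau θ⁻¹ π⁻¹ f : kˣ) : k) * ((cd.tau (π⁻¹ * π') π'⁻¹ f : kˣ) : k) := by
    have h := cd.tau_cocycle θ⁻¹ (π⁻¹ * π') π'⁻¹ f
    rw [hπ'invG] at h
    have h2 : π⁻¹ * π' * π'⁻¹ = π⁻¹ := by group
    rw [h2] at h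
    exact_mod_cast congrArg (Units.val) h
  -- the two `g₁ * θ'⁻¹` style arguments coincide
  have harg : g₁ * θ'⁻¹ = θ⁻¹ * (π⁻¹ * π') := by
    rw [hθ'inv, hθ, th_eq_piX_inv_mul th w, ← hπ, hw]; group
  rw [harg] at i2
  -- unfold muX
  unfold muX
  rw [hth2, hpi2]
  have hzg : z * (g₁ * x)⁻¹ = w := rfl
  have hzx : z * x⁻¹ = w' := rfl
  rw [hzg, hzx, ← hθ, ← hπ, ← hθ', ← hπ', mul_inv_rev, inv_inv]
  -- now a pure field computation from i1, i2, i3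
  have hE : ((cd.tau θ⁻¹ π⁻¹ f : kˣ) : k) ≠ 0 := Units.ne_zero _
  have hC : ((cd.tau θ⁻¹ (π⁻¹ * π') f : kˣ) : k) ≠ 0 := Units.ne_zero _
  have hD : ((cd.tau θ'⁻¹ π'⁻¹ f : kˣ) : k) ≠ 0 := Units.ne_zero _
  field_simp
  linear_combination
    (((cd.tau θ⁻¹ (π⁻¹ * π') f : kˣ) : k) * ((cd.tau θ'⁻¹ π'⁻¹ f : kˣ) : k)) * i1
    + (((cd.tau x z⁻¹ f : kˣ) : k) * ((cd.tau θ⁻¹ (π⁻¹ * π') f : kˣ) : k)) * i2.symm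
    + (((cd.tau x z⁻¹ f : kˣ) : k) * ((cd.tau g₁ θ'⁻¹ f : kˣ) : k)) * i3


/-- Coefficient of `p_g # (z⁻¹ ▷ f)` in the matrix entry `C_{(t,l),(z,i)}` of the
induced comodule. -/
noncomputable def cX (mp : MatchedPair F G) (cd : CocycleData k F G mp) (f : F)
    (th : G → G) (Tf : Finset G) {m : ℕ} (a : G → Matrix (Fin m) (Fin m) k)
    (tl zi : {z : G // z ∈ Tf} × Fin m) (g : G) : k :=
  if (tl.1 : G) = th ((zi.1 : G) * g⁻¹) then
    muX mp cd f th g (zi.1 : G) * a (piX th ((zi.1 : G) * g⁻¹))⁻¹ tl.2 zi.2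
  else 0

lemma aux_multC (mp : MatchedPair F G) (cd : CocycleData k F G mp) (f : F)
    (th : G → G) (Tf : Finset G) {m : ℕ} (a : G → Matrix (Fin m) (Fin m) k)
    (hthG : ∀ x, mp.rtr (piX th x) f = f)
    (hthMul : ∀ v w, mp.rtr v f = f → th (v * w) = th w)
    (hthT : ∀ x, th x ∈ Tf)
    (hacoassoc : ∀ u w : G, mp.rtr u f = f → mp.rtr w f = f →
      a u * a w = ((cd.tau u w f : kˣ) : k) • a (u * w))
    (t zi : {z : G // z ∈ Tf} × Fin m) (g₁ x : G) :
    ∑ u : {z : G // z ∈ Tf}, ∑ q : Fin m,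
        cX mp cd f th Tf a t (u, q) g₁ * cX mp cd f th Tf a (u, q) zi x
      = ((cd.tau g₁ x (mp.rtr ((zi.1 : G))⁻¹ f) : kˣ) : k)
          * cX mp cd f th Tf a t zi (g₁ * x) := by
  have hzmem : th ((zi.1 : G) * x⁻¹) ∈ Tf := hthT _
  rw [Finset.sum_eq_single (⟨th ((zi.1 : G) * x⁻¹), hzmem⟩ : {z : G // z ∈ Tf})]
  · -- main computation at u = u₀
    have hπG : mp.rtr (piX th ((zi.1 : G) * (g₁ * x)⁻¹)) f = f := hthG _
    have hπ'G : mp.rtr (piX th ((zi.1 : G) * x⁻¹)) f = f := hthG _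
    have hkey : th ((zi.1 : G) * x⁻¹) * g₁⁻¹
        = (piX th ((zi.1 : G) * x⁻¹))⁻¹ * ((zi.1 : G) * (g₁ * x)⁻¹) := by
      rw [th_eq_piX_inv_mul th ((zi.1 : G) * x⁻¹)]; group
    have hth2 : th (th ((zi.1 : G) * x⁻¹) * g₁⁻¹) = th ((zi.1 : G) * (g₁ * x)⁻¹) := by
      rw [hkey, hthMul _ _ (aux_stab_inv mp hπ'G)]
    have hpi2 : piX th (th ((zi.1 : G) * x⁻¹) * g₁⁻¹)
        = (piX th ((zi.1 : G) * x⁻¹))⁻¹ * piX th ((zi.1 : G) * (g₁ * x)⁻¹) := by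
      rw [hkey, piX_mul mp f th hthG hthMul _ (aux_stab_inv mp hπ'G)]
    simp only [cX, if_true]
    rw [hth2, hpi2]
    set π : G := piX th ((zi.1 : G) * (g₁ * x)⁻¹) with hπdef
    set π' : G := piX th ((zi.1 : G) * x⁻¹) with hπ'def
    have hAinv : (π'⁻¹ * π)⁻¹ = π⁻¹ * π' := by group
    rw [hAinv]
    have hA : mp.rtr (π⁻¹ * π') f = f :=
      aux_stab_mul mp (aux_stab_inv mp hπG) hπ'G
    have hB : mp.rtr π'⁻¹ f = f := aux_stab_inv mp hπ'G
    have hsum : ∑ q : Fin m, a (π⁻¹ * π') t.2 q * a π'⁻¹ q zi.2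
        = ((cd.tau (π⁻¹ * π') π'⁻¹ f : kˣ) : k) * a π⁻¹ t.2 zi.2 := by
      have h := hacoassoc _ _ hA hB
      calc ∑ q : Fin m, a (π⁻¹ * π') t.2 q * a π'⁻¹ q zi.2
          = (a (π⁻¹ * π') * a π'⁻¹) t.2 zi.2 := (Matrix.mul_apply).symm
        _ = (((cd.tau (π⁻¹ * π') π'⁻¹ f : kˣ) : k) • a (π⁻¹ * π' * π'⁻¹)) t.2 zi.2 := by
            rw [h]
        _ = ((cd.tau (π⁻¹ * π') π'⁻¹ f : kˣ) : k) * a π⁻¹ t.2 zi.2 := by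
            have h2 : π⁻¹ * π' * π'⁻¹ = π⁻¹ := by group
            rw [h2, Matrix.smul_apply, smul_eq_mul]
    by_cases hcase : (t.1 : G) = th ((zi.1 : G) * (g₁ * x)⁻¹)
    · simp only [if_pos hcase]
      have hms := aux_muS mp cd f th hthG hthMul g₁ x (zi.1 : G)
      rw [← hπdef, ← hπ'def] at hms
      calc ∑ q : Fin m, muX mp cd f th g₁ (th ((zi.1 : G) * x⁻¹)) * a (π⁻¹ * π') t.2 q
              * (muX mp cd f th x (zi.1 : G) * a π'⁻¹ q zi.2)
          = muX mp cd f th g₁ (th ((zi.1 : G) * x⁻¹)) * muX mp cd f th x (zi.1 : G)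
              * ∑ q : Fin m, a (π⁻¹ * π') t.2 q * a π'⁻¹ q zi.2 := by
            rw [Finset.mul_sum]; exact Finset.sum_congr rfl fun q _ => by ring
        _ = muX mp cd f th g₁ (th ((zi.1 : G) * x⁻¹)) * muX mp cd f th x (zi.1 : G)
              * (((cd.tau (π⁻¹ * π') π'⁻¹ f : kˣ) : k) * a π⁻¹ t.2 zi.2) := by rw [hsum]
        _ = ((cd.tau g₁ x (mp.rtr ((zi.1 : G))⁻¹ f) : kˣ) : k)
              * (muX mp cd f th (g₁ * x) (zi.1 : G) * a π⁻¹ t.2 zi.2) := by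
            linear_combination (a π⁻¹ t.2 zi.2) * hms.symm
    · simp only [if_neg hcase, zero_mul, Finset.sum_const_zero, mul_zero]
  · intro u _ hne
    apply Finset.sum_eq_zero
    intro q _
    have hno : ¬ ((u : G) = th ((zi.1 : G) * x⁻¹)) := fun h => hne (Subtype.ext h)
    rw [show cX mp cd f th Tf a (u, q) zi x = 0 from if_neg hno, mul_zero]
  · intro h
    exact absurd (Finset.mem_univ _) h

lemma aux_multD {n : ℕ} (b : G → Matrix (Fin n) (Fin n) k)
    (hb : ∀ u w : G, b u * b w = b (u * w)) (p j : Fin n) (h₁ y : G) :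
    ∑ r : Fin n, b h₁ p r * b y r j = b (h₁ * y) p j := by
  rw [← Matrix.mul_apply, hb]

lemma aux_phiTh (mp : MatchedPair F G) (f : F) (th : G → G)
    (hthG : ∀ x, mp.rtr (piX th x) f = f) (z x : G) :
    mp.rtr (th (z * x⁻¹))⁻¹ f = mp.rtr (x * z⁻¹) f := by
  rw [rtr_th_inv mp f th hthG]
  have h : (z * x⁻¹)⁻¹ = x * z⁻¹ := by group
  rw [h]

lemma aux_contract (mp : MatchedPair F G) (cd : CocycleData k F G mp) (f : F)
    (th : G → G) (Tf : Finset G) {m n : ℕ}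
    (a : G → Matrix (Fin m) (Fin m) k) (b : G → Matrix (Fin n) (Fin n) k)
    (hthG : ∀ x, mp.rtr (piX th x) f = f)
    (hthMul : ∀ v w, mp.rtr v f = f → th (v * w) = th w)
    (hthT : ∀ x, th x ∈ Tf)
    (hacoassoc : ∀ u w : G, mp.rtr u f = f → mp.rtr w f = f →
      a u * a w = ((cd.tau u w f : kˣ) : k) • a (u * w))
    (hb : ∀ u w : G, b u * b w = b (u * w))
    (V : Type*) [AddCommMonoid V] [Module k V]
    (Ψ : G × G → G × G → F → V)
    (l i : {z : G // z ∈ Tf} × Fin m) (p j : Fin n) :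
    ∑ qr : ({z : G // z ∈ Tf} × Fin m) × Fin n, ∑ gh : G × G, ∑ xy : G × G,
        (cX mp cd f th Tf a l qr.1 gh.1 * cX mp cd f th Tf a qr.1 i xy.1
            * b gh.2 p qr.2 * b xy.2 qr.2 j)
          • Ψ gh xy (mp.rtr ((qr.1.1 : G))⁻¹ f)
      = ∑ xy : G × G, ∑ gh : G × G,
          (cX mp cd f th Tf a l i gh.1 * b gh.2 p j
              * ((cd.tau (gh.1 * xy.1⁻¹) xy.1 (mp.rtr ((i.1 : G))⁻¹ f) : kˣ) : k))
            • Ψ (gh.1 * xy.1⁻¹, gh.2 * xy.2⁻¹) xy (mp.rtr (xy.1 * ((i.1 : G))⁻¹) f) := by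
  rw [Finset.sum_comm]
  calc ∑ gh : G × G, ∑ qr : ({z : G // z ∈ Tf} × Fin m) × Fin n, ∑ xy : G × G,
        (cX mp cd f th Tf a l qr.1 gh.1 * cX mp cd f th Tf a qr.1 i xy.1
            * b gh.2 p qr.2 * b xy.2 qr.2 j)
          • Ψ gh xy (mp.rtr ((qr.1.1 : G))⁻¹ f)
      = ∑ gh : G × G, ∑ xy : G × G, ∑ qr : ({z : G // z ∈ Tf} × Fin m) × Fin n,
        (cX mp cd f th Tf a l qr.1 gh.1 * cX mp cd f th Tf a qr.1 i xy.1
            * b gh.2 p qr.2 * b xy.2 qr.2 j)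
          • Ψ gh xy (mp.rtr ((qr.1.1 : G))⁻¹ f) := by
        exact Finset.sum_congr rfl fun gh _ => Finset.sum_comm
    _ = ∑ gh : G × G, ∑ xy : G × G,
        (((cd.tau gh.1 xy.1 (mp.rtr ((i.1 : G))⁻¹ f) : kˣ) : k)
            * cX mp cd f th Tf a l i (gh.1 * xy.1) * b (gh.2 * xy.2) p j)
          • Ψ gh xy (mp.rtr (xy.1 * ((i.1 : G))⁻¹ ) f) := by
        refine Finset.sum_congr rfl fun gh _ => Finset.sum_congr rfl fun xy _ => ?_
        -- rewrite the F-argument of Ψ pointwise, then contract the qr-sum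
        have hpoint : ∀ qr : ({z : G // z ∈ Tf} × Fin m) × Fin n,
            (cX mp cd f th Tf a l qr.1 gh.1 * cX mp cd f th Tf a qr.1 i xy.1
              * b gh.2 p qr.2 * b xy.2 qr.2 j) • Ψ gh xy (mp.rtr ((qr.1.1 : G))⁻¹ f)
            = (cX mp cd f th Tf a l qr.1 gh.1 * cX mp cd f th Tf a qr.1 i xy.1
              * b gh.2 p qr.2 * b xy.2 qr.2 j)
                • Ψ gh xy (mp.rtr (xy.1 * ((i.1 : G))⁻¹) f) := by
          intro qr
          by_cases hc : ((qr.1.1 : G)) = th ((i.1 : G) * xy.1⁻¹)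
          · rw [hc, aux_phiTh mp f th hthG]
          · have h0 : cX mp cd f th Tf a qr.1 i xy.1 = 0 := if_neg hc
            rw [h0]
            simp
        rw [Finset.sum_congr rfl fun qr _ => hpoint qr]
        rw [← Finset.sum_smul]
        congr 1
        rw [Fintype.sum_prod_type]
        have hsplit : ∀ q1 : {z : G // z ∈ Tf} × Fin m,
            ∑ r : Fin n, cX mp cd f th Tf a l q1 gh.1 * cX mp cd f th Tf a q1 i xy.1
                * b gh.2 p r * b xy.2 r j
            = (cX mp cd f th Tf a l q1 gh.1 * cX mp cd f th Tf a q1 i xy.1)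
                * ∑ r : Fin n, b gh.2 p r * b xy.2 r j := by
          intro q1
          rw [Finset.mul_sum]
          exact Finset.sum_congr rfl fun r _ => by ring
        rw [Finset.sum_congr rfl fun q1 _ => hsplit q1]
        rw [← Finset.sum_mul, aux_multD b hb p j gh.2 xy.2]
        have hq : ∑ q1 : {z : G // z ∈ Tf} × Fin m,
            cX mp cd f th Tf a l q1 gh.1 * cX mp cd f th Tf a q1 i xy.1
            = ((cd.tau gh.1 xy.1 (mp.rtr ((i.1 : G))⁻¹ f) : kˣ) : k)
                * cX mp cd f th Tf a l i (gh.1 * xy.1) := by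
          rw [Fintype.sum_prod_type]
          exact aux_multC mp cd f th Tf a hthG hthMul hthT hacoassoc l i gh.1 xy.1
        rw [hq]
    _ = ∑ xy : G × G, ∑ gh : G × G,
        (((cd.tau gh.1 xy.1 (mp.rtr ((i.1 : G))⁻¹ f) : kˣ) : k)
            * cX mp cd f th Tf a l i (gh.1 * xy.1) * b (gh.2 * xy.2) p j)
          • Ψ gh xy (mp.rtr (xy.1 * ((i.1 : G))⁻¹ ) f) := Finset.sum_comm
    _ = ∑ xy : G × G, ∑ gh : G × G,
          (cX mp cd f th Tf a l i gh.1 * b gh.2 p j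
              * ((cd.tau (gh.1 * xy.1⁻¹) xy.1 (mp.rtr ((i.1 : G))⁻¹ f) : kˣ) : k))
            • Ψ (gh.1 * xy.1⁻¹, gh.2 * xy.2⁻¹) xy (mp.rtr (xy.1 * ((i.1 : G))⁻¹) f) := by
        refine Finset.sum_congr rfl fun xy _ => ?_
        refine Fintype.sum_equiv
          ((Equiv.mulRight xy.1).prodCongr (Equiv.mulRight xy.2)) _ _ fun gh => ?_
        show _ = (cX mp cd f th Tf a l i (gh.1 * xy.1) * b (gh.2 * xy.2) p j
              * ((cd.tau (gh.1 * xy.1 * xy.1⁻¹) xy.1 (mp.rtr ((i.1 : G))⁻¹ f) : kˣ) : k))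
            • Ψ (gh.1 * xy.1 * xy.1⁻¹, gh.2 * xy.2 * xy.2⁻¹) xy (mp.rtr (xy.1 * ((i.1 : G))⁻¹) f)
        rw [mul_inv_cancel_right, mul_inv_cancel_right, Prod.mk.eta]
        congr 1
        ring

lemma aux_traceconj {J : Type*} [Fintype J] [DecidableEq J]
    {V : Type*} [AddCommMonoid V] [Module k V]
    (B B' : Matrix J J k) (M N : J → J → V)
    (hinv : B' * B = 1)
    (hcomm : ∀ l i, ∑ q, B l q • M q i = ∑ q, B q i • N l q) :
    ∑ i, M i i = ∑ i, N i i := by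
  have hinv2 : B * B' = 1 := mul_eq_one_comm.mp hinv
  calc ∑ i, M i i
      = ∑ i : J, ∑ q : J, (B' * B) i q • M q i := by
        rw [hinv]
        refine Finset.sum_congr rfl fun i _ => ?_
        rw [Finset.sum_eq_single i]
        · rw [Matrix.one_apply_eq, one_smul]
        · intro q _ hq
          rw [Matrix.one_apply_ne (Ne.symm hq), zero_smul]
        · intro h; exact absurd (Finset.mem_univ i) h
    _ = ∑ i, ∑ q, ∑ s, (B' i s * B s q) • M q i := by
        simp only [Matrix.mul_apply, Finset.sum_smul]
    _ = ∑ i, ∑ s, B' i s • ∑ q, B s q • M q i := by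
        refine Finset.sum_congr rfl fun i _ => ?_
        rw [Finset.sum_comm]
        refine Finset.sum_congr rfl fun s _ => ?_
        rw [Finset.smul_sum]
        exact Finset.sum_congr rfl fun q _ => (smul_smul _ _ _).symm
    _ = ∑ i, ∑ s, B' i s • ∑ q, B q i • N s q := by
        exact Finset.sum_congr rfl fun i _ => Finset.sum_congr rfl fun s _ => by rw [hcomm]
    _ = ∑ s, ∑ q, (∑ i, B q i * B' i s) • N s q := by
        rw [Finset.sum_comm]
        refine Finset.sum_congr rfl fun s _ => ?_
        calc ∑ i, B' i s • ∑ q, B q i • N s q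
            = ∑ i, ∑ q, (B q i * B' i s) • N s q := by
              refine Finset.sum_congr rfl fun i _ => ?_
              rw [Finset.smul_sum]
              refine Finset.sum_congr rfl fun q _ => ?_
              rw [smul_smul, mul_comm]
          _ = ∑ q, ∑ i, (B q i * B' i s) • N s q := Finset.sum_comm
          _ = ∑ q, (∑ i, B q i * B' i s) • N s q := by
              refine Finset.sum_congr rfl fun q _ => ?_
              rw [Finset.sum_smul]
    _ = ∑ s, N s s := by
        refine Finset.sum_congr rfl fun s _ => ?_
        rw [Finset.sum_eq_single s]
        · rw [show ∑ i, B s i * B' i s = (B * B') s s from (Matrix.mul_apply).symm, hinv2,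
            Matrix.one_apply_eq, one_smul]
        · intro q _ hq
          rw [show ∑ i, B q i * B' i s = (B * B') q s from (Matrix.mul_apply).symm, hinv2,
            Matrix.one_apply_ne hq, zero_smul]
        · intro h; exact absurd (Finset.mem_univ s) h

end CQTAux

/-- Let `H = k^G τ#_σ kF` admit a coquasitriangular structure, fix `f ∈ F`, and let
`T` be a complete set of representatives of the right cosets of the stabilizer
`G_f = {x : x ▷ f = f}` in `G` with `1 ∈ T`. Let `V` (dimension `m`) be a simple right
comodule over the coalgebra `k^{G_f}_{τ_f}` with coaction matrices
`(a u) l i = a^u_{li}` for `u ∈ G_f` (comodule axioms: `a 1 = 1` and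
`a u * a w = τ(u, w; f) • a (u w)`; simplicity: the only subspaces invariant under all
`a u`, `u ∈ G_f`, are `⊥` and `⊤`), and let `W` (dimension `n`) be a simple right
comodule over `k^G` with coaction matrices `b h`. Then for every `g ∈ G_f` and
`z ∈ T`:
`Σ_i Σ_j a^g_{ii} b^{(z⁻¹gz) ◁ (z⁻¹ ▷ f)}_{jj} = Σ_i Σ_j a^g_{ii} b^{z⁻¹gz}_{jj}`. -/
theorem trace_ltl_eq_of_cqt {k F G : Type*} [Field k] [IsAlgClosed k] [CharZero k]
    [Group F] [Group G] [Fintype G] [DecidableEq G]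
    (mp : MatchedPair F G) (cd : CocycleData k F G mp)
    (hR : ∃ R : G → F → G → F → k, IsCQT mp cd R)
    (f : F) (T : Set G) (hT1 : (1 : G) ∈ T)
    (hT : ∀ x : G, ∃! z : G, z ∈ T ∧ mp.rtr (x * z⁻¹) f = f)
    (m n : ℕ) (hm : 0 < m) (hn : 0 < n)
    (a : G → Matrix (Fin m) (Fin m) k) (b : G → Matrix (Fin n) (Fin n) k)
    (ha1 : a 1 = 1)
    (hacoassoc : ∀ u w : G, mp.rtr u f = f → mp.rtr w f = f →
      a u * a w = ((cd.tau u w f : kˣ) : k) • a (u * w))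
    (hasimple : ∀ U : Submodule k (Fin m → k),
      (∀ v ∈ U, ∀ u : G, mp.rtr u f = f → (a u).mulVec v ∈ U) → U = ⊥ ∨ U = ⊤)
    (hb1 : b 1 = 1)
    (hbcoassoc : ∀ u w : G, b u * b w = b (u * w))
    (hbsimple : ∀ U : Submodule k (Fin n → k),
      (∀ v ∈ U, ∀ u : G, (b u).mulVec v ∈ U) → U = ⊥ ∨ U = ⊤) :
    ∀ g : G, mp.rtr g f = f → ∀ z ∈ T,
      (∑ i : Fin m, ∑ j : Fin n,
          a g i i * b (mp.ltl (z⁻¹ * g * z) (mp.rtr z⁻¹ f)) j j)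
        = ∑ i : Fin m, ∑ j : Fin n, a g i i * b (z⁻¹ * g * z) j j := by

  classical
  intro g₀ hg₀ z₀ hz₀
  obtain ⟨R, hcqt⟩ := hR
  obtain ⟨R', hRR', hR'R⟩ := hcqt.conv_inv
  -- the section `θ` of the coset space
  choose th hth using fun x => (hT x).exists
  have hthT' : ∀ x, th x ∈ T := fun x => (hth x).1
  have hthG : ∀ x, mp.rtr (piX th x) f = f := fun x => (hth x).2
  have hthU : ∀ x z, z ∈ T → mp.rtr (x * z⁻¹) f = f → z = th x :=
    fun x z h1 h2 => (hT x).unique ⟨h1, h2⟩ ⟨(hth x).1, (hth x).2⟩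
  have hthMul : ∀ v w, mp.rtr v f = f → th (v * w) = th w := by
    intro v w hv
    refine (hthU (v * w) (th w) (hthT' w) ?_).symm
    have h1 : v * w * (th w)⁻¹ = v * (w * (th w)⁻¹) := by group
    rw [h1, mp.mul_rtr]
    have h2 : mp.rtr (w * (th w)⁻¹) f = f := hthG w
    rw [h2, hv]
  have hthFix : ∀ z, z ∈ T → th z = z := by
    intro z hz
    refine (hthU z z hz ?_).symm
    rw [mul_inv_cancel, mp.one_rtr]
  set Tf : Finset G := (Set.toFinite T).toFinset with hTfdef
  have hmemTf : ∀ z : G, z ∈ Tf ↔ z ∈ T := fun z => (Set.toFinite T).mem_toFinset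
  have hthT : ∀ x, th x ∈ Tf := fun x => (hmemTf _).mpr (hthT' x)
  -- injectivity of `z ↦ z⁻¹ ▷ f` on `T`
  have hTinj : ∀ u : G, u ∈ T → mp.rtr u⁻¹ f = mp.rtr z₀⁻¹ f → u = z₀ := by
    intro u hu hrtr
    have h1 : mp.rtr (z₀ * u⁻¹) f = f := by
      rw [mp.mul_rtr, hrtr, ← mp.mul_rtr, mul_inv_cancel, mp.one_rtr]
    rw [hthU z₀ u hu h1, hthFix z₀ hz₀]
  -- the three matrices
  set Bm : (({z : G // z ∈ Tf} × Fin m) × Fin n) → (({z : G // z ∈ Tf} × Fin m) × Fin n) → k :=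
    fun lp qr => ∑ gh : G × G,
      cX mp cd f th Tf a lp.1 qr.1 gh.1 * b gh.2 lp.2 qr.2
        * R gh.1 (mp.rtr ((qr.1.1 : G))⁻¹ f) gh.2 1 with hBmdef
  set Bm' : (({z : G // z ∈ Tf} × Fin m) × Fin n) → (({z : G // z ∈ Tf} × Fin m) × Fin n) → k :=
    fun lp qr => ∑ gh : G × G,
      cX mp cd f th Tf a lp.1 qr.1 gh.1 * b gh.2 lp.2 qr.2
        * R' gh.1 (mp.rtr ((qr.1.1 : G))⁻¹ f) gh.2 1 with hBm'def
  set Mm : (({z : G // z ∈ Tf} × Fin m) × Fin n) → (({z : G // z ∈ Tf} × Fin m) × Fin n) → ((G × F) →₀ k) :=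
    fun qr ij => ∑ xy : G × G,
      (cX mp cd f th Tf a qr.1 ij.1 xy.1 * b xy.2 qr.2 ij.2)
        • mulB mp cd (xy.1, mp.rtr ((ij.1.1 : G))⁻¹ f) (xy.2, 1) with hMmdef
  set Nm : (({z : G // z ∈ Tf} × Fin m) × Fin n) → (({z : G // z ∈ Tf} × Fin m) × Fin n) → ((G × F) →₀ k) :=
    fun lp qr => ∑ gh : G × G,
      (cX mp cd f th Tf a lp.1 qr.1 gh.1 * b gh.2 lp.2 qr.2)
        • mulB mp cd (gh.2, 1) (gh.1, mp.rtr ((qr.1.1 : G))⁻¹ f) with hNmdef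
  have htau1 : ∀ (u y : G), ((cd.tau u y (1 : F) : kˣ) : k) = 1 := by
    intro u y; rw [cd.tau_one_right, Units.val_one]
  have hpull : ∀ (c : k) (S P : G → G → k) (W : G → G → ((G × F) →₀ k)),
      ∑ xy : G × G, (c * S xy.1 xy.2) • (P xy.1 xy.2 • W xy.1 xy.2)
        = c • ∑ x : G, ∑ y : G, (S x y * P x y) • W x y := by
    intro c S P W
    rw [Fintype.sum_prod_type, Finset.smul_sum]
    refine Finset.sum_congr rfl fun x _ => ?_
    rw [Finset.smul_sum]
    refine Finset.sum_congr rfl fun y _ => ?_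
    rw [smul_smul, smul_smul, mul_assoc]
  have hcomm : ∀ lp ij, ∑ qr, Bm lp qr • Mm qr ij = ∑ qr, Bm qr ij • Nm lp qr := by
    intro lp ij
    have hexpL : ∀ qr, Bm lp qr • Mm qr ij = ∑ gh : G × G, ∑ xy : G × G,
        (cX mp cd f th Tf a lp.1 qr.1 gh.1 * cX mp cd f th Tf a qr.1 ij.1 xy.1
            * b gh.2 lp.2 qr.2 * b xy.2 qr.2 ij.2)
          • ((fun (gh xy : G × G) (φ : F) => (R gh.1 φ gh.2 1)
                • mulB mp cd (xy.1, mp.rtr ((ij.1.1 : G))⁻¹ f) (xy.2, 1))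
              gh xy (mp.rtr ((qr.1.1 : G))⁻¹ f)) := by
      intro qr
      rw [hBmdef, hMmdef]
      rw [Finset.sum_smul]
      refine Finset.sum_congr rfl fun gh _ => ?_
      rw [Finset.smul_sum]
      refine Finset.sum_congr rfl fun xy _ => ?_
      show _ = _ • ((R gh.1 (mp.rtr ((qr.1.1 : G))⁻¹ f) gh.2 1)
        • mulB mp cd (xy.1, mp.rtr ((ij.1.1 : G))⁻¹ f) (xy.2, 1))
      rw [smul_smul, smul_smul]
      congr 1
      ring
    have hexpR : ∀ qr, Bm qr ij • Nm lp qr = ∑ gh : G × G, ∑ xy : G × G,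
        (cX mp cd f th Tf a lp.1 qr.1 gh.1 * cX mp cd f th Tf a qr.1 ij.1 xy.1
            * b gh.2 lp.2 qr.2 * b xy.2 qr.2 ij.2)
          • ((fun (gh xy : G × G) (φ : F) => (R xy.1 (mp.rtr ((ij.1.1 : G))⁻¹ f) xy.2 1)
                • mulB mp cd (gh.2, 1) (gh.1, φ))
              gh xy (mp.rtr ((qr.1.1 : G))⁻¹ f)) := by
      intro qr
      rw [hBmdef, hNmdef]
      rw [Finset.sum_smul]
      refine Eq.trans (Finset.sum_congr rfl fun xy _ => Finset.smul_sum) ?_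
      refine Eq.trans Finset.sum_comm ?_
      refine Finset.sum_congr rfl fun gh _ => Finset.sum_congr rfl fun xy _ => ?_
      show _ = _ • ((R xy.1 (mp.rtr ((ij.1.1 : G))⁻¹ f) xy.2 1)
        • mulB mp cd (gh.2, 1) (gh.1, mp.rtr ((qr.1.1 : G))⁻¹ f))
      rw [smul_smul, smul_smul]
      congr 1
      ring
    rw [Finset.sum_congr rfl fun qr _ => hexpL qr,
      Finset.sum_congr rfl fun qr _ => hexpR qr]
    rw [aux_contract mp cd f th Tf a b hthG hthMul hthT hacoassoc hbcoassoc
      ((G × F) →₀ k)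
      (fun (gh xy : G × G) (φ : F) => (R gh.1 φ gh.2 1)
        • mulB mp cd (xy.1, mp.rtr ((ij.1.1 : G))⁻¹ f) (xy.2, 1)) lp.1 ij.1 lp.2 ij.2]
    rw [aux_contract mp cd f th Tf a b hthG hthMul hthT hacoassoc hbcoassoc
      ((G × F) →₀ k)
      (fun (gh xy : G × G) (φ : F) => (R xy.1 (mp.rtr ((ij.1.1 : G))⁻¹ f) xy.2 1)
        • mulB mp cd (gh.2, 1) (gh.1, φ)) lp.1 ij.1 lp.2 ij.2]
    rw [Finset.sum_comm]
    calc ∑ gh : G × G, ∑ xy : G × G,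
          (cX mp cd f th Tf a lp.1 ij.1 gh.1 * b gh.2 lp.2 ij.2
              * ((cd.tau (gh.1 * xy.1⁻¹) xy.1 (mp.rtr ((ij.1.1 : G))⁻¹ f) : kˣ) : k))
            • ((R (gh.1 * xy.1⁻¹) (mp.rtr (xy.1 * ((ij.1.1 : G))⁻¹) f) (gh.2 * xy.2⁻¹) 1)
                • mulB mp cd (xy.1, mp.rtr ((ij.1.1 : G))⁻¹ f) (xy.2, 1))
        = ∑ gh : G × G, ∑ xy : G × G,
          (cX mp cd f th Tf a lp.1 ij.1 gh.1 * b gh.2 lp.2 ij.2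
              * ((cd.tau (gh.1 * xy.1⁻¹) xy.1 (mp.rtr ((ij.1.1 : G))⁻¹ f) : kˣ) : k))
            • ((R xy.1 (mp.rtr ((ij.1.1 : G))⁻¹ f) xy.2 1)
                • mulB mp cd (gh.2 * xy.2⁻¹, 1)
                    (gh.1 * xy.1⁻¹, mp.rtr (xy.1 * ((ij.1.1 : G))⁻¹) f)) := by
          refine Finset.sum_congr rfl fun gh _ => ?_
          have hq := hcqt.qcomm gh.1 gh.2 (mp.rtr ((ij.1.1 : G))⁻¹ f) 1
          simp only [htau1, mul_one, aux_rtr_one mp, ← mp.mul_rtr] at hq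
          rw [hpull (cX mp cd f th Tf a lp.1 ij.1 gh.1 * b gh.2 lp.2 ij.2)
            (fun x y => ((cd.tau (gh.1 * x⁻¹) x (mp.rtr ((ij.1.1 : G))⁻¹ f) : kˣ) : k))
            (fun x y => R (gh.1 * x⁻¹) (mp.rtr (x * ((ij.1.1 : G))⁻¹) f) (gh.2 * y⁻¹) 1)
            (fun x y => mulB mp cd (x, mp.rtr ((ij.1.1 : G))⁻¹ f) (y, 1))]
          rw [hpull (cX mp cd f th Tf a lp.1 ij.1 gh.1 * b gh.2 lp.2 ij.2)
            (fun x y => ((cd.tau (gh.1 * x⁻¹) x (mp.rtr ((ij.1.1 : G))⁻¹ f) : kˣ) : k))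
            (fun x y => R x (mp.rtr ((ij.1.1 : G))⁻¹ f) y 1)
            (fun x y => mulB mp cd (gh.2 * y⁻¹, 1)
              (gh.1 * x⁻¹, mp.rtr (x * ((ij.1.1 : G))⁻¹) f))]
          rw [hq]
      _ = ∑ xy : G × G, ∑ gh : G × G,
          (cX mp cd f th Tf a lp.1 ij.1 gh.1 * b gh.2 lp.2 ij.2
              * ((cd.tau (gh.1 * xy.1⁻¹) xy.1 (mp.rtr ((ij.1.1 : G))⁻¹ f) : kˣ) : k))
            • ((R xy.1 (mp.rtr ((ij.1.1 : G))⁻¹ f) xy.2 1)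
                • mulB mp cd (gh.2 * xy.2⁻¹, 1)
                    (gh.1 * xy.1⁻¹, mp.rtr (xy.1 * ((ij.1.1 : G))⁻¹) f)) := Finset.sum_comm
  have hinv : (Matrix.of Bm') * (Matrix.of Bm) = 1 := by
    ext lp ij
    rw [Matrix.mul_apply]
    simp only [Matrix.of_apply]
    have hexp : ∀ qr, Bm' lp qr * Bm qr ij = ∑ gh : G × G, ∑ xy : G × G,
        (cX mp cd f th Tf a lp.1 qr.1 gh.1 * cX mp cd f th Tf a qr.1 ij.1 xy.1
            * b gh.2 lp.2 qr.2 * b xy.2 qr.2 ij.2)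
          • ((fun (gh xy : G × G) (φ : F) => R' gh.1 φ gh.2 1
                * R xy.1 (mp.rtr ((ij.1.1 : G))⁻¹ f) xy.2 1)
              gh xy (mp.rtr ((qr.1.1 : G))⁻¹ f)) := by
      intro qr
      rw [hBm'def, hBmdef]
      rw [Finset.sum_mul_sum]
      refine Finset.sum_congr rfl fun gh _ => Finset.sum_congr rfl fun xy _ => ?_
      rw [smul_eq_mul]
      ring
    rw [Finset.sum_congr rfl fun qr _ => hexp qr]
    rw [aux_contract mp cd f th Tf a b hthG hthMul hthT hacoassoc hbcoassoc k
      (fun (gh xy : G × G) (φ : F) => R' gh.1 φ gh.2 1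
        * R xy.1 (mp.rtr ((ij.1.1 : G))⁻¹ f) xy.2 1) lp.1 ij.1 lp.2 ij.2]
    rw [Finset.sum_comm]
    have hstep : ∀ gh : G × G, ∑ xy : G × G,
        (cX mp cd f th Tf a lp.1 ij.1 gh.1 * b gh.2 lp.2 ij.2
            * ((cd.tau (gh.1 * xy.1⁻¹) xy.1 (mp.rtr ((ij.1.1 : G))⁻¹ f) : kˣ) : k))
          • (R' (gh.1 * xy.1⁻¹) (mp.rtr (xy.1 * ((ij.1.1 : G))⁻¹) f) (gh.2 * xy.2⁻¹) 1
              * R xy.1 (mp.rtr ((ij.1.1 : G))⁻¹ f) xy.2 1)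
        = (cX mp cd f th Tf a lp.1 ij.1 gh.1 * b gh.2 lp.2 ij.2)
            * ((if gh.1 = 1 then (1 : k) else 0) * (if gh.2 = 1 then (1 : k) else 0)) := by
      intro gh
      have hc := hR'R gh.1 gh.2 (mp.rtr ((ij.1.1 : G))⁻¹ f) 1
      simp only [htau1, mul_one, aux_rtr_one mp, ← mp.mul_rtr] at hc
      rw [← hc]
      rw [Fintype.sum_prod_type, Finset.mul_sum]
      refine Finset.sum_congr rfl fun x _ => ?_
      rw [Finset.mul_sum]
      refine Finset.sum_congr rfl fun y _ => ?_
      rw [smul_eq_mul]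
      ring
    rw [Finset.sum_congr rfl fun gh _ => hstep gh]
    have hcX1 : ∀ l1 i1 : {z : G // z ∈ Tf} × Fin m,
        cX mp cd f th Tf a l1 i1 1 = if l1 = i1 then 1 else 0 := by
      intro l1 i1
      have hfix : th ((i1.1 : G)) = (i1.1 : G) := hthFix _ ((hmemTf _).mp i1.1.2)
      have hpi1 : piX th ((i1.1 : G)) = 1 := by rw [piX_def, hfix, mul_inv_cancel]
      rw [cX, inv_one, mul_one, hfix, hpi1, inv_one, ha1,
        muX_one mp cd f th _ hfix, one_mul]
      by_cases h1 : (l1.1 : G) = (i1.1 : G)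
      · rw [if_pos h1]
        by_cases h2 : l1.2 = i1.2
        · rw [h2, Matrix.one_apply_eq, if_pos (Prod.ext (Subtype.ext h1) h2)]
        · rw [Matrix.one_apply_ne h2, if_neg (fun hc => h2 (congrArg Prod.snd hc))]
      · rw [if_neg h1, if_neg (fun hc => h1 (by rw [hc]))]
    rw [Fintype.sum_prod_type]
    dsimp only
    rw [Finset.sum_eq_single (1 : G)]
    · rw [Finset.sum_eq_single (1 : G)]
      · have h11 : (if (1 : G) = 1 then (1 : k) else 0) = 1 := if_pos rfl
        rw [h11, mul_one, mul_one, hcX1, hb1]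
        by_cases h1 : lp.1 = ij.1
        · by_cases h2 : lp.2 = ij.2
          · rw [if_pos h1, h2, Matrix.one_apply_eq, one_mul,
              show lp = ij from Prod.ext h1 h2, Matrix.one_apply_eq]
          · rw [Matrix.one_apply_ne h2, mul_zero,
              Matrix.one_apply_ne (fun hc => h2 (congrArg Prod.snd hc))]
        · rw [if_neg h1, zero_mul,
            Matrix.one_apply_ne (fun hc => h1 (congrArg Prod.fst hc))]
      · intro y _ hy
        rw [if_neg hy, mul_zero, mul_zero]
      · intro h; exact absurd (Finset.mem_univ _) h
    · intro x _ hx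
      refine Finset.sum_eq_zero fun y _ => ?_
      rw [if_neg hx, zero_mul, mul_zero]
    · intro h; exact absurd (Finset.mem_univ _) h
  have htrace : ∑ qr, Mm qr qr = ∑ qr, Nm qr qr :=
    aux_traceconj (Matrix.of Bm) (Matrix.of Bm') Mm Nm hinv hcomm
  -- evaluate both sides at the point `(z₀⁻¹ g₀ z₀, z₀⁻¹ ▷ f)`
  have hmulBval : ∀ (x y : G) (ψ : F),
      (mulB mp cd (x, ψ) (y, 1)) (z₀⁻¹ * g₀ * z₀, mp.rtr z₀⁻¹ f)
      = if x = z₀⁻¹ * g₀ * z₀ ∧ ψ = mp.rtr z₀⁻¹ f ∧ y = mp.ltl x ψ then 1 else 0 := by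
    intro x y ψ
    by_cases h1 : mp.ltl x ψ = y
    · rw [mulB, if_pos h1]
      have hσ : ((cd.sig x ψ 1 : kˣ) : k) = 1 := by rw [cd.sig_one_right, Units.val_one]
      rw [mul_one, Finsupp.single_apply, hσ]
      by_cases h2 : x = z₀⁻¹ * g₀ * z₀
      · by_cases h3 : ψ = mp.rtr z₀⁻¹ f
        · rw [if_pos (by rw [h2, h3]), if_pos ⟨h2, h3, h1.symm⟩]
        · rw [if_neg (fun hc => h3 (congrArg Prod.snd hc)), if_neg (fun hc => h3 hc.2.1)]
      · rw [if_neg (fun hc => h2 (congrArg Prod.fst hc)), if_neg (fun hc => h2 hc.1)]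
    · rw [mulB, if_neg h1]
      rw [if_neg (fun hc => h1 hc.2.2.symm)]
      rfl
  have hcXdiag : ∀ i i' : Fin m,
      cX mp cd f th Tf a (⟨z₀, (hmemTf z₀).mpr hz₀⟩, i) (⟨z₀, (hmemTf z₀).mpr hz₀⟩, i')
          (z₀⁻¹ * g₀ * z₀)
        = muX mp cd f th (z₀⁻¹ * g₀ * z₀) z₀ * a g₀ i i' := by
    intro i i'
    have h1 : z₀ * (z₀⁻¹ * g₀ * z₀)⁻¹ = g₀⁻¹ * z₀ := by group
    have hth0 : th (g₀⁻¹ * z₀) = z₀ := by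
      rw [hthMul g₀⁻¹ z₀ (aux_stab_inv mp hg₀), hthFix z₀ hz₀]
    have hpi0 : piX th (g₀⁻¹ * z₀) = g₀⁻¹ := by
      rw [piX_def, hth0]; group
    rw [cX]
    dsimp only
    rw [h1, hth0, hpi0, inv_inv, if_pos rfl]
  have hMeval : (∑ qr, Mm qr qr) (z₀⁻¹ * g₀ * z₀, mp.rtr z₀⁻¹ f)
      = muX mp cd f th (z₀⁻¹ * g₀ * z₀) z₀ * ((∑ i, a g₀ i i)
          * ∑ j, b (mp.ltl (z₀⁻¹ * g₀ * z₀) (mp.rtr z₀⁻¹ f)) j j) := by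
    rw [Finsupp.finset_sum_apply]
    have hterm : ∀ qr : ({z : G // z ∈ Tf} × Fin m) × Fin n,
        Mm qr qr (z₀⁻¹ * g₀ * z₀, mp.rtr z₀⁻¹ f)
        = ∑ xy : G × G, (cX mp cd f th Tf a qr.1 qr.1 xy.1 * b xy.2 qr.2 qr.2)
            * (if xy.1 = z₀⁻¹ * g₀ * z₀ ∧ mp.rtr ((qr.1.1 : G))⁻¹ f = mp.rtr z₀⁻¹ f
                  ∧ xy.2 = mp.ltl xy.1 (mp.rtr ((qr.1.1 : G))⁻¹ f) then 1 else 0) := by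
      intro qr
      rw [hMmdef]
      rw [Finsupp.finset_sum_apply]
      refine Finset.sum_congr rfl fun xy _ => ?_
      rw [Finsupp.smul_apply, hmulBval, smul_eq_mul]
    rw [Finset.sum_congr rfl fun qr _ => hterm qr]
    rw [Fintype.sum_prod_type, Fintype.sum_prod_type]
    rw [Finset.sum_eq_single (⟨z₀, (hmemTf z₀).mpr hz₀⟩ : {z : G // z ∈ Tf})]
    · have hcond : mp.rtr ((((⟨z₀, (hmemTf z₀).mpr hz₀⟩ : {z : G // z ∈ Tf}) : G))⁻¹) f
          = mp.rtr z₀⁻¹ f := rfl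
      calc ∑ i : Fin m, ∑ r : Fin n, ∑ xy : G × G,
            (cX mp cd f th Tf a (⟨z₀, (hmemTf z₀).mpr hz₀⟩, i) (⟨z₀, (hmemTf z₀).mpr hz₀⟩, i) xy.1
              * b xy.2 r r)
            * (if xy.1 = z₀⁻¹ * g₀ * z₀ ∧ mp.rtr z₀⁻¹ f = mp.rtr z₀⁻¹ f
                  ∧ xy.2 = mp.ltl xy.1 (mp.rtr z₀⁻¹ f) then 1 else 0)
          = ∑ i : Fin m, ∑ r : Fin n,
              (muX mp cd f th (z₀⁻¹ * g₀ * z₀) z₀ * a g₀ i i)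
                * b (mp.ltl (z₀⁻¹ * g₀ * z₀) (mp.rtr z₀⁻¹ f)) r r := by
            refine Finset.sum_congr rfl fun i _ => Finset.sum_congr rfl fun r _ => ?_
            rw [Finset.sum_eq_single
              ((z₀⁻¹ * g₀ * z₀, mp.ltl (z₀⁻¹ * g₀ * z₀) (mp.rtr z₀⁻¹ f)) : G × G)]
            · rw [if_pos ⟨rfl, rfl, rfl⟩, mul_one, hcXdiag]
            · intro xy _ hne
              rw [if_neg, mul_zero]
              rintro ⟨ha, -, hb2⟩
              exact hne (Prod.ext ha (by rw [hb2, ha]))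
            · intro h; exact absurd (Finset.mem_univ _) h
        _ = muX mp cd f th (z₀⁻¹ * g₀ * z₀) z₀ * ((∑ i, a g₀ i i)
              * ∑ j, b (mp.ltl (z₀⁻¹ * g₀ * z₀) (mp.rtr z₀⁻¹ f)) j j) := by
            rw [Finset.sum_mul_sum, Finset.mul_sum]
            refine Finset.sum_congr rfl fun i _ => ?_
            rw [Finset.mul_sum]
            refine Finset.sum_congr rfl fun r _ => by ring
    · intro u _ hne
      have hu : ((u : G)) ≠ z₀ := fun hc => hne (Subtype.ext hc)
      refine Finset.sum_eq_zero fun i _ => Finset.sum_eq_zero fun r _ =>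
        Finset.sum_eq_zero fun xy _ => ?_
      rw [if_neg, mul_zero]
      rintro ⟨-, hb2, -⟩
      exact hu (hTinj (u : G) ((hmemTf _).mp u.2)
        (by rw [← hb2]))
    · intro h; exact absurd (Finset.mem_univ _) h
  have hNeval : (∑ qr, Nm qr qr) (z₀⁻¹ * g₀ * z₀, mp.rtr z₀⁻¹ f)
      = muX mp cd f th (z₀⁻¹ * g₀ * z₀) z₀ * ((∑ i, a g₀ i i)
          * ∑ j, b (z₀⁻¹ * g₀ * z₀) j j) := by
    have hmulBval2 : ∀ (h g : G) (ψ : F),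
        (mulB mp cd (h, 1) (g, ψ)) (z₀⁻¹ * g₀ * z₀, mp.rtr z₀⁻¹ f)
        = if h = z₀⁻¹ * g₀ * z₀ ∧ ψ = mp.rtr z₀⁻¹ f ∧ g = h then 1 else 0 := by
      intro h g ψ
      by_cases h1 : mp.ltl h 1 = g
      · rw [mulB, if_pos h1]
        have hσ : ((cd.sig h 1 ψ : kˣ) : k) = 1 := by rw [cd.sig_one_left, Units.val_one]
        rw [one_mul, Finsupp.single_apply, hσ]
        have hg : g = h := by rw [← h1, mp.ltl_one]
        by_cases h2 : h = z₀⁻¹ * g₀ * z₀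
        · by_cases h3 : ψ = mp.rtr z₀⁻¹ f
          · rw [if_pos (by rw [h2, h3]), if_pos ⟨h2, h3, hg⟩]
          · rw [if_neg (fun hc => h3 (congrArg Prod.snd hc)), if_neg (fun hc => h3 hc.2.1)]
        · rw [if_neg (fun hc => h2 (congrArg Prod.fst hc)), if_neg (fun hc => h2 hc.1)]
      · rw [mulB, if_neg h1]
        rw [if_neg (fun hc => h1 (by rw [mp.ltl_one, hc.2.2]))]
        rfl
    rw [Finsupp.finset_sum_apply]
    have hterm : ∀ qr : ({z : G // z ∈ Tf} × Fin m) × Fin n,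
        Nm qr qr (z₀⁻¹ * g₀ * z₀, mp.rtr z₀⁻¹ f)
        = ∑ gh : G × G, (cX mp cd f th Tf a qr.1 qr.1 gh.1 * b gh.2 qr.2 qr.2)
            * (if gh.2 = z₀⁻¹ * g₀ * z₀ ∧ mp.rtr ((qr.1.1 : G))⁻¹ f = mp.rtr z₀⁻¹ f
                  ∧ gh.1 = gh.2 then 1 else 0) := by
      intro qr
      rw [hNmdef]
      rw [Finsupp.finset_sum_apply]
      refine Finset.sum_congr rfl fun gh _ => ?_
      rw [Finsupp.smul_apply, hmulBval2, smul_eq_mul]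
    rw [Finset.sum_congr rfl fun qr _ => hterm qr]
    rw [Fintype.sum_prod_type, Fintype.sum_prod_type]
    rw [Finset.sum_eq_single (⟨z₀, (hmemTf z₀).mpr hz₀⟩ : {z : G // z ∈ Tf})]
    · calc ∑ i : Fin m, ∑ r : Fin n, ∑ gh : G × G,
            (cX mp cd f th Tf a (⟨z₀, (hmemTf z₀).mpr hz₀⟩, i) (⟨z₀, (hmemTf z₀).mpr hz₀⟩, i) gh.1
              * b gh.2 r r)
            * (if gh.2 = z₀⁻¹ * g₀ * z₀ ∧ mp.rtr z₀⁻¹ f = mp.rtr z₀⁻¹ f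
                  ∧ gh.1 = gh.2 then 1 else 0)
          = ∑ i : Fin m, ∑ r : Fin n,
              (muX mp cd f th (z₀⁻¹ * g₀ * z₀) z₀ * a g₀ i i)
                * b (z₀⁻¹ * g₀ * z₀) r r := by
            refine Finset.sum_congr rfl fun i _ => Finset.sum_congr rfl fun r _ => ?_
            rw [Finset.sum_eq_single ((z₀⁻¹ * g₀ * z₀, z₀⁻¹ * g₀ * z₀) : G × G)]
            · rw [if_pos ⟨rfl, rfl, rfl⟩, mul_one, hcXdiag]
            · intro gh _ hne
              rw [if_neg, mul_zero]
              rintro ⟨ha, -, hb2⟩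
              exact hne (Prod.ext (by rw [hb2, ha]) ha)
            · intro h; exact absurd (Finset.mem_univ _) h
        _ = muX mp cd f th (z₀⁻¹ * g₀ * z₀) z₀ * ((∑ i, a g₀ i i)
              * ∑ j, b (z₀⁻¹ * g₀ * z₀) j j) := by
            rw [Finset.sum_mul_sum, Finset.mul_sum]
            refine Finset.sum_congr rfl fun i _ => ?_
            rw [Finset.mul_sum]
            refine Finset.sum_congr rfl fun r _ => by ring
    · intro u _ hne
      have hu : ((u : G)) ≠ z₀ := fun hc => hne (Subtype.ext hc)
      refine Finset.sum_eq_zero fun i _ => Finset.sum_eq_zero fun r _ =>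
        Finset.sum_eq_zero fun gh _ => ?_
      rw [if_neg, mul_zero]
      rintro ⟨-, hb2, -⟩
      exact hu (hTinj (u : G) ((hmemTf _).mp u.2) (by rw [← hb2]))
    · intro h; exact absurd (Finset.mem_univ _) h
  have hfin : (∑ i, a g₀ i i) * (∑ j, b (mp.ltl (z₀⁻¹ * g₀ * z₀) (mp.rtr z₀⁻¹ f)) j j)
      = (∑ i, a g₀ i i) * (∑ j, b (z₀⁻¹ * g₀ * z₀) j j) := by
    apply mul_left_cancel₀ (muX_ne_zero mp cd f th (z₀⁻¹ * g₀ * z₀) z₀)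
    rw [← hMeval, ← hNeval, htrace]
  calc ∑ i : Fin m, ∑ j : Fin n, a g₀ i i * b (mp.ltl (z₀⁻¹ * g₀ * z₀) (mp.rtr z₀⁻¹ f)) j j
      = (∑ i, a g₀ i i) * (∑ j, b (mp.ltl (z₀⁻¹ * g₀ * z₀) (mp.rtr z₀⁻¹ f)) j j) := by
        rw [Finset.sum_mul_sum]
    _ = (∑ i, a g₀ i i) * (∑ j, b (z₀⁻¹ * g₀ * z₀) j j) := hfin
    _ = ∑ i : Fin m, ∑ j : Fin n, a g₀ i i * b (z₀⁻¹ * g₀ * z₀) j j := by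
        rw [Finset.sum_mul_sum]
end
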